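/- Suppose that X₁,…,X_N ∈ ℝ^K is an i.i.d. sample from a distribution whose k-th marginal CDF is F_k^{θ₀} and Y₁^{θ},…,Y_n^{θ} ∈ ℝ^K is an independent i.i.d. sample from a distribution whose k-th marginal CDF is F_k^{θ}, with F_{N,k}^{θ₀} and F_{n,k}^{θ} the empirical distribution functions of the k-th components, and suppose max_{1≤k≤K} sup_{x∈ℝ} |F_k^{θ}(x) − F_k^{θ₀}(x)| > 0. For any ε₁, ε₂ > 0 with ε₁ + ε₂ < max_{1≤k≤K} sup_{x∈ℝ} |F_k^{θ}(x) − F_k^{θ₀}(x)|, if N > ( q_{1−α/K} / (max_{1≤k≤K} sup_{x∈ℝ} |F_k^{θ}(x) − F_k^{θ₀}(x)| − ε₁ − ε₂) )², then ℙ( sup_{x∈ℝ} |F_{n,k}^{θ}(x) − F_{N,k}^{θ₀}(x)| ≤ q_{1−α/K}/√N for all 1 ≤ k ≤ K ) ≤ 2( e^{−2nε₁²} + e^{−2Nε₂²} ). -/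

import Mathlib

open MeasureTheory ProbabilityTheory Filter

section Aux

lemma hoeffding_bernoulli' {p : ℝ} (hp0 : 0 ≤ p) (hp1 : p ≤ 1) (t : ℝ) :
    (1 + (Real.exp t - 1) * p) * Real.exp (-(t * p)) ≤ Real.exp (t ^ 2 / 8) := by
  have hD : ∀ s : ℝ, 0 < 1 - p + p * Real.exp s := by
    intro s
    rcases lt_or_eq_of_le hp1 with h | h
    · have := Real.exp_pos s; nlinarith
    · have := Real.exp_pos s; nlinarith
  set g : ℝ → ℝ := fun s => p * s + s ^ 2 / 8 - Real.log (1 - p + p * Real.exp s) with hg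
  set g' : ℝ → ℝ := fun s => p + s / 4 - p * Real.exp s / (1 - p + p * Real.exp s) with hg'
  have hDg : ∀ s, HasDerivAt g (g' s) s := by
    intro s
    have hd : HasDerivAt (fun s => 1 - p + p * Real.exp s) (p * Real.exp s) s := by
      simpa using (((Real.hasDerivAt_exp s).const_mul p).const_add (1 - p))
    have hlog : HasDerivAt (fun s => Real.log (1 - p + p * Real.exp s))
        (p * Real.exp s / (1 - p + p * Real.exp s)) s := hd.log (hD s).ne'
    have h1 : HasDerivAt (fun s : ℝ => p * s + s ^ 2 / 8) (p + s / 4) s := by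
      have : HasDerivAt (fun s : ℝ => p * s + s ^ 2 / 8) (p * 1 + 2 * s / 8) s := by
        simpa [Pi.add_def] using ((hasDerivAt_id s).const_mul p).add
          (((hasDerivAt_pow 2 s)).div_const 8)
      convert this using 1; ring
    simpa [hg, hg', Pi.sub_def] using h1.sub hlog
  have hDg' : ∀ s, HasDerivAt g'
      (1 / 4 - p * Real.exp s * (1 - p) / (1 - p + p * Real.exp s) ^ 2) s := by
    intro s
    have hd : HasDerivAt (fun s => 1 - p + p * Real.exp s) (p * Real.exp s) s := by
      simpa using (((Real.hasDerivAt_exp s).const_mul p).const_add (1 - p))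
    have hnum : HasDerivAt (fun s => p * Real.exp s) (p * Real.exp s) s :=
      (Real.hasDerivAt_exp s).const_mul p
    have hdiv : HasDerivAt (fun s => p * Real.exp s / (1 - p + p * Real.exp s))
        ((p * Real.exp s * (1 - p + p * Real.exp s) - p * Real.exp s * (p * Real.exp s)) /
          (1 - p + p * Real.exp s) ^ 2) s := hnum.div hd (hD s).ne'
    have h1 : HasDerivAt (fun s : ℝ => p + s / 4) (1 / 4) s := by
      simpa using ((hasDerivAt_id s).div_const 4).const_add p
    have : HasDerivAt (fun s => p + s / 4 - p * Real.exp s / (1 - p + p * Real.exp s)) _ s :=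
      h1.sub hdiv
    convert this using 1
    ring
  have hg'mono : Monotone g' := by
    refine monotone_of_deriv_nonneg (fun s => (hDg' s).differentiableAt) (fun s => ?_)
    rw [(hDg' s).deriv]
    have h1 := hD s
    have h2 := Real.exp_pos s
    have hsq : 4 * (p * Real.exp s * (1 - p)) ≤ (1 - p + p * Real.exp s) ^ 2 := by
      nlinarith [sq_nonneg (1 - p - p * Real.exp s)]
    rw [sub_nonneg, div_le_iff₀ (by positivity)]
    nlinarith
  have hg'0 : g' 0 = 0 := by simp [hg']
  have hg0 : g 0 = 0 := by simp [hg]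
  have hgnonneg : ∀ s, 0 ≤ g s := by
    intro s
    rcases le_total 0 s with hs | hs
    · have hmono : MonotoneOn g (Set.Ici 0) := by
        refine monotoneOn_of_deriv_nonneg (convex_Ici 0)
          (Continuous.continuousOn (by
            have : Differentiable ℝ g := fun s => (hDg s).differentiableAt
            exact this.continuous))
          (fun x _ => (hDg x).differentiableAt.differentiableWithinAt) (fun x hx => ?_)
        rw [(hDg x).deriv]
        have : g' 0 ≤ g' x := hg'mono (le_of_lt (by simpa using hx))
        rw [hg'0] at this
        simpa [hg'] using this
      have := hmono (Set.self_mem_Ici) (Set.mem_Ici.2 hs) hs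
      rwa [hg0] at this
    · have hmono : AntitoneOn g (Set.Iic 0) := by
        refine antitoneOn_of_deriv_nonpos (convex_Iic 0)
          (Continuous.continuousOn (by
            have : Differentiable ℝ g := fun s => (hDg s).differentiableAt
            exact this.continuous))
          (fun x _ => (hDg x).differentiableAt.differentiableWithinAt) (fun x hx => ?_)
        rw [(hDg x).deriv]
        have : g' x ≤ g' 0 := hg'mono (le_of_lt (by simpa using hx))
        rw [hg'0] at this
        simpa [hg'] using this
      have := hmono (Set.mem_Iic.2 hs) (Set.self_mem_Iic) hs
      rwa [hg0] at this
  have hlogle : Real.log (1 - p + p * Real.exp t) ≤ p * t + t ^ 2 / 8 := by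
    have := hgnonneg t
    simp only [hg, sub_nonneg] at this
    linarith
  have hDle : 1 - p + p * Real.exp t ≤ Real.exp (p * t + t ^ 2 / 8) :=
    (Real.log_le_iff_le_exp (hD t)).1 hlogle
  have : (1 + (Real.exp t - 1) * p) = 1 - p + p * Real.exp t := by ring
  rw [this]
  calc (1 - p + p * Real.exp t) * Real.exp (-(t * p))
      ≤ Real.exp (p * t + t ^ 2 / 8) * Real.exp (-(t * p)) := by
        apply mul_le_mul_of_nonneg_right hDle (Real.exp_nonneg _)
    _ = Real.exp (t ^ 2 / 8) := by rw [← Real.exp_add]; ring_nf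

lemma iIndepFun_precomp' {Ω ι ι' β : Type*} [MeasurableSpace Ω] {mβ : MeasurableSpace β}
    {μ : Measure Ω} {f : ι → Ω → β} (h : iIndepFun (m := fun _ => mβ) f μ)
    (u : ι' → ι) (hu : Function.Injective u) :
    iIndepFun (m := fun _ => mβ) (fun i => f (u i)) μ := by
  classical
  rw [iIndepFun_iff_measure_inter_preimage_eq_mul] at h ⊢
  intro S sets hsets
  have key := h (S.image u)
    (sets := Function.extend u sets (fun _ => Set.univ)) (fun i hi => by
      rcases Finset.mem_image.1 hi with ⟨j, hj, rfl⟩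
      rw [hu.extend_apply]
      exact hsets j hj)
  have h1 : (⋂ i ∈ S.image u, f i ⁻¹' Function.extend u sets (fun _ => Set.univ) i)
      = ⋂ j ∈ S, f (u j) ⁻¹' sets j := by
    rw [Finset.set_biInter_finset_image]
    exact Set.iInter₂_congr fun j _ => by rw [hu.extend_apply]
  have h2 : (∏ i ∈ S.image u, μ (f i ⁻¹' Function.extend u sets (fun _ => Set.univ) i))
      = ∏ j ∈ S, μ (f (u j) ⁻¹' sets j) := by
    rw [Finset.prod_image (fun a _ b _ hab => hu hab)]
    exact Finset.prod_congr rfl fun j _ => by rw [hu.extend_apply]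
  rw [h1, h2] at key
  exact key

lemma bernoulli_mgf' {Ω : Type*} [MeasurableSpace Ω] (Pr : Measure Ω) [IsProbabilityMeasure Pr]
    {p : ℝ} (B : Ω → ℝ) (hmeas : Measurable B) (hval : ∀ ω, B ω = 0 ∨ B ω = 1)
    (hmean : ∫ ω, B ω ∂Pr = p) (t : ℝ) :
    mgf (fun ω => B ω - p) Pr t = (1 + (Real.exp t - 1) * p) * Real.exp (-(t * p)) := by
  have hBint : Integrable B Pr := by
    refine Integrable.mono' (integrable_const 1) hmeas.aestronglyMeasurable
      (Filter.Eventually.of_forall fun ω => ?_)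
    rcases hval ω with h | h <;> simp [h]
  have hptw : ∀ ω, Real.exp (t * (B ω - p))
      = Real.exp (-(t * p)) * (1 + (Real.exp t - 1) * B ω) := by
    intro ω
    rcases hval ω with h | h
    · simp [h]
    · rw [h, show t * (1 - p) = t + -(t * p) by ring, Real.exp_add]
      ring
  have : mgf (fun ω => B ω - p) Pr t
      = ∫ ω, Real.exp (-(t * p)) * (1 + (Real.exp t - 1) * B ω) ∂Pr := by
    unfold mgf
    exact integral_congr_ae (Filter.Eventually.of_forall fun ω => hptw ω)
  rw [this, integral_const_mul,
    integral_add (integrable_const 1) (hBint.const_mul _), integral_const_mul, hmean]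
  simp [mul_comm]

set_option maxHeartbeats 1000000 in
lemma bernoulli_tail' {Ω : Type*} [MeasurableSpace Ω] (Pr : Measure Ω) [IsProbabilityMeasure Pr]
    {m : ℕ} {p : ℝ} (hp0 : 0 ≤ p) (hp1 : p ≤ 1)
    (B : Fin m → Ω → ℝ) (hmeas : ∀ i, Measurable (B i))
    (hval : ∀ i ω, B i ω = 0 ∨ B i ω = 1)
    (hmean : ∀ i, ∫ ω, B i ω ∂Pr = p)
    (hind : iIndepFun (fun i ω => B i ω - p) Pr)
    {ε : ℝ} (hε : 0 < ε) :
    (Pr {ω | (m : ℝ) * ε ≤ ∑ i, (B i ω - p)}).toReal ≤ Real.exp (-2 * m * ε ^ 2) ∧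
    (Pr {ω | ∑ i, (B i ω - p) ≤ -((m : ℝ) * ε)}).toReal ≤ Real.exp (-2 * m * ε ^ 2) := by
  have hXmeas : Measurable (fun ω => ∑ i, (B i ω - p)) :=
    Finset.measurable_sum Finset.univ (fun i _ => (hmeas i).sub measurable_const)
  have hint : ∀ t : ℝ, Integrable (fun ω => Real.exp (t * ∑ i, (B i ω - p))) Pr := by
    intro t
    refine Integrable.mono' (integrable_const (Real.exp (|t| * (m * (1 + |p|)))))
      ((hXmeas.const_mul t).exp).aestronglyMeasurable
      (Filter.Eventually.of_forall fun ω => ?_)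
    rw [Real.norm_eq_abs, Real.abs_exp]
    apply Real.exp_le_exp.2
    calc t * ∑ i, (B i ω - p) ≤ |t * ∑ i, (B i ω - p)| := le_abs_self _
      _ = |t| * |∑ i, (B i ω - p)| := abs_mul _ _
      _ ≤ |t| * (m * (1 + |p|)) := by
          apply mul_le_mul_of_nonneg_left _ (abs_nonneg t)
          calc |∑ i, (B i ω - p)| ≤ ∑ i, |B i ω - p| := Finset.abs_sum_le_sum_abs _ _
            _ ≤ ∑ _i : Fin m, (1 + |p|) := by
                apply Finset.sum_le_sum
                intro i _
                rcases hval i ω with h | h <;>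
                  · rw [h, abs_sub_comm]
                    refine (abs_sub _ _).trans ?_
                    simp [add_comm]
            _ = m * (1 + |p|) := by simp; ring
  have hXeq : (fun ω => ∑ i, (B i ω - p)) = ∑ i ∈ Finset.univ, (fun ω => B i ω - p) := by
    funext ω; rw [Finset.sum_apply]
  have hmgf : ∀ t : ℝ, mgf (fun ω => ∑ i, (B i ω - p)) Pr t ≤ Real.exp (m * (t ^ 2 / 8)) := by
    intro t
    rw [hXeq, hind.mgf_sum (fun i => (hmeas i).sub measurable_const)]
    calc ∏ i : Fin m, mgf (fun ω => B i ω - p) Pr t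
        ≤ ∏ _i : Fin m, Real.exp (t ^ 2 / 8) := by
          apply Finset.prod_le_prod (fun i _ => mgf_nonneg)
          intro i _
          rw [bernoulli_mgf' Pr (B i) (hmeas i) (hval i) (hmean i) t]
          exact hoeffding_bernoulli' hp0 hp1 t
      _ = Real.exp (m * (t ^ 2 / 8)) := by
          rw [Finset.prod_const, ← Real.exp_nat_mul]
          simp
  have hintX : ∀ t : ℝ, Integrable (fun ω =>
      Real.exp (t * (fun ω => ∑ i, (B i ω - p)) ω)) Pr := fun t => hint t
  constructor
  · have h := measure_ge_le_exp_mul_mgf (μ := Pr) (X := fun ω => ∑ i, (B i ω - p))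
      ((m : ℝ) * ε) (t := 4 * ε) (by positivity) (hintX _)
    refine h.trans ?_
    calc Real.exp (-(4 * ε) * ((m : ℝ) * ε)) * mgf (fun ω => ∑ i, (B i ω - p)) Pr (4 * ε)
        ≤ Real.exp (-(4 * ε) * ((m : ℝ) * ε)) * Real.exp (m * ((4 * ε) ^ 2 / 8)) :=
          mul_le_mul_of_nonneg_left (hmgf _) (Real.exp_nonneg _)
      _ = Real.exp (-2 * m * ε ^ 2) := by rw [← Real.exp_add]; ring_nf
  · have h := measure_le_le_exp_mul_mgf (μ := Pr) (X := fun ω => ∑ i, (B i ω - p))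
      (-((m : ℝ) * ε)) (t := -(4 * ε)) (by linarith) (hintX _)
    refine h.trans ?_
    calc Real.exp (-(-(4 * ε)) * -((m : ℝ) * ε)) * mgf (fun ω => ∑ i, (B i ω - p)) Pr (-(4 * ε))
        ≤ Real.exp (-(-(4 * ε)) * -((m : ℝ) * ε)) * Real.exp (m * ((-(4 * ε)) ^ 2 / 8)) :=
          mul_le_mul_of_nonneg_left (hmgf _) (Real.exp_nonneg _)
      _ = Real.exp (-2 * m * ε ^ 2) := by rw [← Real.exp_add]; ring_nf

end Aux

/-- Empirical distribution function of the `k`-th coordinate of a finite sample of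
`ℝ^K`-valued random variables. -/
noncomputable def ecdfCoordFin {Ω : Type*} {K M : ℕ} (Z : Fin M → Ω → Fin K → ℝ)
    (k : Fin K) (ω : Ω) (x : ℝ) : ℝ :=
  (M : ℝ)⁻¹ * ∑ i, if Z i ω k ≤ x then (1 : ℝ) else 0

section Group

variable {Ω : Type*} [MeasurableSpace Ω]

lemma ecdf_nonneg {K M : ℕ} (Z : Fin M → Ω → Fin K → ℝ) (k : Fin K) (ω : Ω) (x : ℝ) :
    0 ≤ ecdfCoordFin Z k ω x := by
  unfold ecdfCoordFin
  apply mul_nonneg (by positivity)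
  apply Finset.sum_nonneg
  intro i _
  split <;> norm_num

lemma ecdf_le_one {K M : ℕ} (Z : Fin M → Ω → Fin K → ℝ) (k : Fin K) (ω : Ω) (x : ℝ) :
    ecdfCoordFin Z k ω x ≤ 1 := by
  unfold ecdfCoordFin
  rcases Nat.eq_zero_or_pos M with hM | hM
  · subst hM; simp
  have h1 : (∑ i : Fin M, if Z i ω k ≤ x then (1 : ℝ) else 0) ≤ M := by
    calc (∑ i : Fin M, if Z i ω k ≤ x then (1 : ℝ) else 0) ≤ ∑ _i : Fin M, (1 : ℝ) := by
          apply Finset.sum_le_sum; intro i _; split <;> norm_num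
      _ = M := by simp
  have hM' : (0 : ℝ) < M := by exact_mod_cast hM
  calc (M : ℝ)⁻¹ * ∑ i, (if Z i ω k ≤ x then (1 : ℝ) else 0)
      ≤ (M : ℝ)⁻¹ * M := by
        apply mul_le_mul_of_nonneg_left h1 (by positivity)
    _ = 1 := inv_mul_cancel₀ hM'.ne'

/-- One-sample two-sided tail bound at a fixed coordinate and point. -/
lemma group_tail {K M : ℕ} (Pr : Measure Ω) [IsProbabilityMeasure Pr] (hM : 0 < M)
    (Z : Fin M → Ω → Fin K → ℝ) (hZm : ∀ i, Measurable (Z i))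
    (hind : iIndepFun Z Pr)
    (ρ : Measure (Fin K → ℝ)) [IsProbabilityMeasure ρ]
    (hZρ : ∀ i, Measure.map (Z i) Pr = ρ)
    (k : Fin K) (x : ℝ) {ε : ℝ} (hε : 0 < ε) :
    (Pr {ω | ε ≤ |ecdfCoordFin Z k ω x - (ρ {v | v k ≤ x}).toReal|}).toReal
      ≤ 2 * Real.exp (-2 * M * ε ^ 2) := by
  classical
  set S : Set (Fin K → ℝ) := {v | v k ≤ x} with hSdef
  have hS : MeasurableSet S := measurableSet_le (measurable_pi_apply k) measurable_const
  set p : ℝ := (ρ S).toReal with hpdef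
  have hp0 : 0 ≤ p := ENNReal.toReal_nonneg
  have hp1 : p ≤ 1 := by
    rw [hpdef]
    exact ENNReal.toReal_mono (by simp) prob_le_one |>.trans (by simp)
  set B : Fin M → Ω → ℝ := fun i ω => S.indicator (fun _ => (1 : ℝ)) (Z i ω) with hBdef
  have hBval : ∀ i ω, B i ω = 0 ∨ B i ω = 1 := by
    intro i ω
    by_cases h : Z i ω ∈ S
    · right; simp [hBdef, Set.indicator_apply, h]
    · left; simp [hBdef, Set.indicator_apply, h]
  have hBmeas : ∀ i, Measurable (B i) :=
    fun i => (measurable_const.indicator hS).comp (hZm i)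
  have hBmean : ∀ i, ∫ ω, B i ω ∂Pr = p := by
    intro i
    have h1 : ∫ ω, B i ω ∂Pr = ∫ v, S.indicator (fun _ => (1 : ℝ)) v ∂(Measure.map (Z i) Pr) := by
      rw [integral_map (hZm i).aemeasurable]
      exact (measurable_const.indicator hS).aestronglyMeasurable
    rw [h1, hZρ i, MeasureTheory.integral_indicator_const (1 : ℝ) hS]
    simp [hpdef, measureReal_def]
  have hBind : iIndepFun (fun i ω => B i ω - p) Pr := by
    have hg : Measurable (fun v : Fin K → ℝ => S.indicator (fun _ => (1 : ℝ)) v - p) :=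
      (measurable_const.indicator hS).sub measurable_const
    exact hind.comp (fun _ v => S.indicator (fun _ => (1 : ℝ)) v - p) (fun _ => hg)
  have htail := bernoulli_tail' Pr hp0 hp1 B hBmeas hBval hBmean hBind hε
  have hsum : ∀ ω, ∑ i, (B i ω - p) = (M : ℝ) * (ecdfCoordFin Z k ω x - p) := by
    intro ω
    have hM' : (0 : ℝ) < M := by exact_mod_cast hM
    have hecdf : ecdfCoordFin Z k ω x = (M : ℝ)⁻¹ * ∑ i, B i ω := by
      unfold ecdfCoordFin
      congr 1
    rw [Finset.sum_sub_distrib, Finset.sum_const, hecdf]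
    simp only [Finset.card_univ, Fintype.card_fin, nsmul_eq_mul]
    field_simp
  have hincl : {ω | ε ≤ |ecdfCoordFin Z k ω x - p|}
      ⊆ {ω | (M : ℝ) * ε ≤ ∑ i, (B i ω - p)} ∪ {ω | ∑ i, (B i ω - p) ≤ -((M : ℝ) * ε)} := by
    intro ω hω
    simp only [Set.mem_setOf_eq] at hω
    have hM' : (0 : ℝ) ≤ M := by positivity
    rcases le_abs.1 hω with h | h
    · left
      simp only [Set.mem_setOf_eq, hsum ω]
      exact mul_le_mul_of_nonneg_left h hM'
    · right
      simp only [Set.mem_setOf_eq, hsum ω]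
      have := mul_le_mul_of_nonneg_left h hM'
      linarith
  calc (Pr {ω | ε ≤ |ecdfCoordFin Z k ω x - p|}).toReal
      ≤ (Pr {ω | (M : ℝ) * ε ≤ ∑ i, (B i ω - p)}
          + Pr {ω | ∑ i, (B i ω - p) ≤ -((M : ℝ) * ε)}).toReal :=
        ENNReal.toReal_mono (ENNReal.add_ne_top.2 ⟨measure_ne_top _ _, measure_ne_top _ _⟩)
          ((measure_mono hincl).trans (measure_union_le _ _))
    _ = (Pr {ω | (M : ℝ) * ε ≤ ∑ i, (B i ω - p)}).toReal
          + (Pr {ω | ∑ i, (B i ω - p) ≤ -((M : ℝ) * ε)}).toReal :=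
        ENNReal.toReal_add (measure_ne_top _ _) (measure_ne_top _ _)
    _ ≤ Real.exp (-2 * M * ε ^ 2) + Real.exp (-2 * M * ε ^ 2) := add_le_add htail.1 htail.2
    _ = 2 * Real.exp (-2 * M * ε ^ 2) := by ring

end Group


set_option maxHeartbeats 1000000 in
/-- **Theorem 10 (SKS with Bonferroni correction: Type II error bound).** -/
theorem stmt_14
    {Ω : Type*} [MeasurableSpace Ω] (Pr : Measure Ω) [IsProbabilityMeasure Pr]
    {K : ℕ} (hK : 0 < K)
    (μ ν : Measure (Fin K → ℝ)) [IsProbabilityMeasure μ] [IsProbabilityMeasure ν]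
    {N n : ℕ} (hN0 : 0 < N) (hn0 : 0 < n)
    (X : Fin N → Ω → Fin K → ℝ) (Y : Fin n → Ω → Fin K → ℝ)
    (hXm : ∀ i, Measurable (X i)) (hYm : ∀ j, Measurable (Y j))
    (hindep : iIndepFun (Sum.elim X Y) Pr)
    (hX : ∀ i, Measure.map (X i) Pr = μ) (hY : ∀ j, Measure.map (Y j) Pr = ν)
    (α : ℝ) (hα : α ∈ Set.Ioo (0 : ℝ) 1)
    -- `q` is the `(1 - α/K)`-quantile of the supremum of the absolute value of a
    -- Brownian bridge: the unique `z > 0` with `2 ∑_{v=1}^∞ (-1)^{v-1} e^{-2 v² z²} = α/K`.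
    (q : ℝ) (hq0 : 0 < q)
    (hq : 2 * ∑' v : ℕ, (-1 : ℝ) ^ v * Real.exp (-2 * ((v : ℝ) + 1) ^ 2 * q ^ 2) = α / K)
    -- `maxKS` is `max_{1 ≤ k ≤ K} sup_x |F_k^θ(x) - F_k^{θ₀}(x)|`, with the `k`-th marginal
    -- CDFs `F_k^θ(x) = ν {v | v k ≤ x}` and `F_k^{θ₀}(x) = μ {v | v k ≤ x}`.
    (maxKS : ℝ)
    (hmaxKS : maxKS = ⨆ k : Fin K, ⨆ x : ℝ,
      |(ν {v | v k ≤ x}).toReal - (μ {v | v k ≤ x}).toReal|)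
    (hKSpos : 0 < maxKS)
    (ε₁ ε₂ : ℝ) (hε₁ : 0 < ε₁) (hε₂ : 0 < ε₂) (hεsum : ε₁ + ε₂ < maxKS)
    (hNlarge : (N : ℝ) > (q / (maxKS - ε₁ - ε₂)) ^ 2) :
    (Pr {ω | ∀ k : Fin K,
        (⨆ x : ℝ, |ecdfCoordFin Y k ω x - ecdfCoordFin X k ω x|) ≤ q / Real.sqrt N}).toReal
      ≤ 2 * (Real.exp (-2 * n * ε₁ ^ 2) + Real.exp (-2 * N * ε₂ ^ 2)) := by
  have hNefK : Nonempty (Fin K) := ⟨⟨0, hK⟩⟩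
  have hd0 : 0 < maxKS - ε₁ - ε₂ := by linarith
  have hNpos : (0 : ℝ) < N := by exact_mod_cast hN0
  have hsqrtN : 0 < Real.sqrt N := Real.sqrt_pos.2 hNpos
  have hqN : q / Real.sqrt N < maxKS - ε₁ - ε₂ := by
    have h1 : q / (maxKS - ε₁ - ε₂) < Real.sqrt N :=
      (Real.lt_sqrt (by positivity)).2 hNlarge
    rw [div_lt_iff₀ hd0] at h1
    rw [div_lt_iff₀ hsqrtN]
    nlinarith
  have hcmax : ε₁ + ε₂ + q / Real.sqrt N < maxKS := by linarith
  rw [hmaxKS] at hcmax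
  obtain ⟨k, hk⟩ := exists_lt_of_lt_ciSup hcmax
  obtain ⟨x, hx⟩ := exists_lt_of_lt_ciSup hk
  have hYind : iIndepFun Y Pr :=
    iIndepFun_precomp' hindep Sum.inr Sum.inr_injective
  have hXind : iIndepFun X Pr :=
    iIndepFun_precomp' hindep Sum.inl Sum.inl_injective
  have hT1 := group_tail Pr hn0 Y hYm hYind ν hY k x hε₁
  have hT2 := group_tail Pr hN0 X hXm hXind μ hX k x hε₂
  set p : ℝ := (ν {v | v k ≤ x}).toReal with hp
  set p0 : ℝ := (μ {v | v k ≤ x}).toReal with hp0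
  have hincl : {ω | ∀ k : Fin K,
        (⨆ x : ℝ, |ecdfCoordFin Y k ω x - ecdfCoordFin X k ω x|) ≤ q / Real.sqrt N}
      ⊆ {ω | ε₁ ≤ |ecdfCoordFin Y k ω x - p|} ∪ {ω | ε₂ ≤ |ecdfCoordFin X k ω x - p0|} := by
    intro ω hω
    simp only [Set.mem_setOf_eq] at hω
    by_contra hcon
    simp only [Set.mem_union, Set.mem_setOf_eq, not_or, not_le] at hcon
    obtain ⟨h1, h2⟩ := hcon
    have hbdd : BddAbove (Set.range
        (fun x' : ℝ => |ecdfCoordFin Y k ω x' - ecdfCoordFin X k ω x'|)) := by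
      refine ⟨2, ?_⟩
      rintro y ⟨x', rfl⟩
      have ha := ecdf_nonneg Y k ω x'
      have hb := ecdf_le_one Y k ω x'
      have hc := ecdf_nonneg X k ω x'
      have hd := ecdf_le_one X k ω x'
      rw [abs_le]
      constructor <;> linarith
    have hle : |ecdfCoordFin Y k ω x - ecdfCoordFin X k ω x|
        ≤ ⨆ x' : ℝ, |ecdfCoordFin Y k ω x' - ecdfCoordFin X k ω x'| := le_ciSup hbdd x
    have hsup := hω k
    have htri : |p - p0| ≤ |ecdfCoordFin Y k ω x - p|
        + (|ecdfCoordFin Y k ω x - ecdfCoordFin X k ω x| + |ecdfCoordFin X k ω x - p0|) := by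
      have h0 : p - p0 = -(ecdfCoordFin Y k ω x - p)
          + ((ecdfCoordFin Y k ω x - ecdfCoordFin X k ω x) + (ecdfCoordFin X k ω x - p0)) := by
        ring
      rw [h0]
      refine (abs_add_le _ _).trans (add_le_add (le_of_eq (abs_neg _)) (abs_add_le _ _))
    have : |p - p0| < ε₁ + (q / Real.sqrt N + ε₂) := by
      have := hle.trans hsup
      linarith
    linarith [hx]
  calc (Pr {ω | ∀ k : Fin K,
        (⨆ x : ℝ, |ecdfCoordFin Y k ω x - ecdfCoordFin X k ω x|) ≤ q / Real.sqrt N}).toReal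
      ≤ (Pr {ω | ε₁ ≤ |ecdfCoordFin Y k ω x - p|}
          + Pr {ω | ε₂ ≤ |ecdfCoordFin X k ω x - p0|}).toReal :=
        ENNReal.toReal_mono (ENNReal.add_ne_top.2 ⟨measure_ne_top _ _, measure_ne_top _ _⟩)
          ((measure_mono hincl).trans (measure_union_le _ _))
    _ = (Pr {ω | ε₁ ≤ |ecdfCoordFin Y k ω x - p|}).toReal
          + (Pr {ω | ε₂ ≤ |ecdfCoordFin X k ω x - p0|}).toReal :=
        ENNReal.toReal_add (measure_ne_top _ _) (measure_ne_top _ _)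
    _ ≤ 2 * Real.exp (-2 * n * ε₁ ^ 2) + 2 * Real.exp (-2 * N * ε₂ ^ 2) := add_le_add hT1 hT2
    _ = 2 * (Real.exp (-2 * n * ε₁ ^ 2) + Real.exp (-2 * N * ε₂ ^ 2)) := by ring
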